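/- The set R = {x ∈ ℝ³ : x₃(x₁² + x₂²)(x₁ + x₂) = x₁⁴} is an irreducible real analytic subset of ℝ³ of constant dimension 2, i.e. R cannot be written as the union of two real analytic subsets of ℝ³ each different from R, and the local dimension dim_p R equals 2 at every point p ∈ R. -/

import Mathlib

open scoped ENNReal

noncomputable section

/-- Germ inclusion `R_p ⊆ Q_p`: `R ∩ V ⊆ Q` for some open neighbourhood `V` of `p`. -/
def GermLE {E : Type*} [TopologicalSpace E] (R Q : Set E) (p : E) : Prop :=
  ∃ V : Set E, IsOpen V ∧ p ∈ V ∧ R ∩ V ⊆ Q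

/-- `R` is a real analytic subset of the open set `Ω`. -/
def IsRealAnalyticSubset {E : Type*} [NormedAddCommGroup E] [NormedSpace ℝ E]
    (Ω R : Set E) : Prop :=
  R ⊆ Ω ∧ ∀ p ∈ Ω, ∃ U : Set E, IsOpen U ∧ p ∈ U ∧ U ⊆ Ω ∧
    ∃ (k : ℕ) (φ : Fin k → E → ℝ),
      (∀ i, AnalyticOnNhd ℝ (φ i) U) ∧ R ∩ U = {x ∈ U | ∀ i, φ i x = 0}

/-- `X` is a complex analytic subset of the open set `W`. -/
def IsComplexAnalyticSubset {E : Type*} [NormedAddCommGroup E] [NormedSpace ℂ E]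
    (W X : Set E) : Prop :=
  X ⊆ W ∧ ∀ p ∈ W, ∃ U : Set E, IsOpen U ∧ p ∈ U ∧ U ⊆ W ∧
    ∃ (k : ℕ) (φ : Fin k → E → ℂ),
      (∀ i, AnalyticOnNhd ℂ (φ i) U) ∧ X ∩ U = {x ∈ U | ∀ i, φ i x = 0}

/-- The local (Hausdorff) dimension of `R` at `p`. -/
def locDim {E : Type*} [EMetricSpace E] (R : Set E) (p : E) : ℝ≥0∞ :=
  ⨅ (U : Set E) (_ : IsOpen U) (_ : p ∈ U), dimH (R ∩ U)

/-- `X` represents the smallest complex analytic germ at `p` containing the germ of `R`. -/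
def IsSmallestComplexGermAt {E : Type*} [NormedAddCommGroup E] [NormedSpace ℂ E]
    (R : Set E) (p : E) (X : Set E) : Prop :=
  (∃ U : Set E, IsOpen U ∧ p ∈ U ∧ IsComplexAnalyticSubset U X) ∧
  GermLE R X p ∧
  ∀ (U' Y : Set E), IsOpen U' → p ∈ U' → IsComplexAnalyticSubset U' Y →
    GermLE R Y p → GermLE X Y p

/-- `S` is closed and nowhere dense in `R` (with its subspace topology). -/
def ClosedNowhereDenseIn {E : Type*} [TopologicalSpace E] (R S : Set E) : Prop :=
  S ⊆ R ∧ IsClosed {x : R | (x : E) ∈ S} ∧ interior {x : R | (x : E) ∈ S} = ∅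

/-- The set `{x ∈ ℝ³ : x₃(x₁² + x₂²)(x₁ + x₂) = x₁⁴}`. -/
def cartanSet3 : Set (Fin 3 → ℝ) :=
  {x | x 2 * (x 0 ^ 2 + x 1 ^ 2) * (x 0 + x 1) = x 0 ^ 4}

namespace CartanAux

open Set

abbrev E3 := Fin 3 → ℝ
def ee (i : Fin 3) : E3 := Pi.single i 1
def gg (w : ℝ × ℝ) : ℝ := w.1 ^ 4 / ((w.1 ^ 2 + w.2 ^ 2) * (w.1 + w.2))
def Φ (w : ℝ × ℝ) : E3 := w.1 • ee 0 + w.2 • ee 1 + gg w • ee 2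

@[simp] lemma Φ_apply0 (w : ℝ × ℝ) : Φ w 0 = w.1 := by simp [Φ, ee, Pi.single_apply]
@[simp] lemma Φ_apply1 (w : ℝ × ℝ) : Φ w 1 = w.2 := by simp [Φ, ee, Pi.single_apply]
@[simp] lemma Φ_apply2 (w : ℝ × ℝ) : Φ w 2 = gg w := by simp [Φ, ee, Pi.single_apply]

lemma denom_ne_zero {w : ℝ × ℝ} (hw : w.1 + w.2 ≠ 0) :
    (w.1 ^ 2 + w.2 ^ 2) * (w.1 + w.2) ≠ 0 := by
  have h1 : w.1 ^ 2 + w.2 ^ 2 ≠ 0 := by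
    intro h
    have h1 : w.1 = 0 ∧ w.2 = 0 := by constructor <;> nlinarith [sq_nonneg w.1, sq_nonneg w.2]
    exact hw (by rw [h1.1, h1.2]; ring)
  exact mul_ne_zero h1 hw

lemma analyticAt_gg {w : ℝ × ℝ} (hw : w.1 + w.2 ≠ 0) : AnalyticAt ℝ gg w := by
  have h1 : AnalyticAt ℝ (fun p : ℝ × ℝ => p.1) w := analyticAt_fst
  have h2 : AnalyticAt ℝ (fun p : ℝ × ℝ => p.2) w := analyticAt_snd
  exact (h1.pow 4).div (((h1.pow 2).add (h2.pow 2)).mul (h1.add h2)) (denom_ne_zero hw)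

lemma analyticAt_Φ {w : ℝ × ℝ} (hw : w.1 + w.2 ≠ 0) : AnalyticAt ℝ Φ w := by
  have h1 : AnalyticAt ℝ (fun p : ℝ × ℝ => p.1) w := analyticAt_fst
  have h2 : AnalyticAt ℝ (fun p : ℝ × ℝ => p.2) w := analyticAt_snd
  exact ((h1.smul analyticAt_const).add (h2.smul analyticAt_const)).add
    ((analyticAt_gg hw).smul analyticAt_const)

lemma Φ_mem {w : ℝ × ℝ} (hw : w.1 + w.2 ≠ 0) : Φ w ∈ cartanSet3 := by
  show Φ w 2 * (Φ w 0 ^ 2 + Φ w 1 ^ 2) * (Φ w 0 + Φ w 1) = Φ w 0 ^ 4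
  simp only [Φ_apply0, Φ_apply1, Φ_apply2, gg]
  rw [div_mul_eq_mul_div, div_mul_eq_mul_div, div_eq_iff (denom_ne_zero hw)]
  ring

lemma graph_eq {x : E3} (hx : x ∈ cartanSet3) (hne : x 0 + x 1 ≠ 0) :
    Φ (x 0, x 1) = x := by
  have hx' : x 2 * (x 0 ^ 2 + x 1 ^ 2) * (x 0 + x 1) = x 0 ^ 4 := hx
  have hd : (x 0 ^ 2 + x 1 ^ 2) * (x 0 + x 1) ≠ 0 := denom_ne_zero (w := (x 0, x 1)) hne
  funext i
  fin_cases i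
  · simp
  · simp
  · have : gg (x 0, x 1) = x 2 := by
      simp only [gg]
      rw [eq_comm, eq_div_iff hd]
      linarith [hx']
    simp [this]

lemma axis_of_sum_eq_zero {x : E3} (hx : x ∈ cartanSet3) (h0 : x 0 + x 1 = 0) :
    x 0 = 0 ∧ x 1 = 0 := by
  have hx' : x 2 * (x 0 ^ 2 + x 1 ^ 2) * (x 0 + x 1) = x 0 ^ 4 := hx
  rw [h0, mul_zero] at hx'
  have h1 : x 0 = 0 := by nlinarith [pow_eq_zero_iff (n := 4) (by norm_num) |>.mp hx'.symm]
  exact ⟨h1, by linarith⟩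

lemma isClosed_of_analytic {E : Type*} [NormedAddCommGroup E] [NormedSpace ℝ E]
    {A : Set E} (hA : IsRealAnalyticSubset (Set.univ : Set E) A) : IsClosed A := by
  rw [← isOpen_compl_iff]
  rw [isOpen_iff_mem_nhds]
  intro p hp
  obtain ⟨U, hUo, hpU, -, k, φ, hφ, hAU⟩ := hA.2 p (mem_univ p)
  have hne : ∃ i, φ i p ≠ 0 := by
    by_contra h
    push_neg at h
    have : p ∈ A ∩ U := by rw [hAU]; exact ⟨hpU, h⟩
    exact hp this.1
  obtain ⟨i, hi⟩ := hne
  have hWo : IsOpen (U ∩ (φ i) ⁻¹' {0}ᶜ) :=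
    (hφ i).continuousOn.isOpen_inter_preimage hUo (isOpen_compl_iff.mpr isClosed_singleton)
  refine Filter.mem_of_superset (hWo.mem_nhds ⟨hpU, hi⟩) ?_
  intro x hx hxA
  have : x ∈ A ∩ U := ⟨hxA, hx.1⟩
  rw [hAU] at this
  exact hx.2 (this.2 i)

/-- Propagation of germ containment along a connected graph domain. -/
lemma propagate {C : Set E3} (hC : IsRealAnalyticSubset (Set.univ : Set E3) C)
    {H : Set (ℝ × ℝ)} (hHo : IsOpen H) (hHc : IsPreconnected H)
    (hHD : ∀ w ∈ H, w.1 + w.2 ≠ 0)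
    (hinit : ∃ w ∈ H, ∃ V : Set E3, IsOpen V ∧ Φ w ∈ V ∧
      ∀ w' ∈ H, Φ w' ∈ V → Φ w' ∈ C) :
    ∀ w ∈ H, Φ w ∈ C := by
  classical
  set T : Set (ℝ × ℝ) := {w ∈ H | ∃ V : Set E3, IsOpen V ∧ Φ w ∈ V ∧
      ∀ w' ∈ H, Φ w' ∈ V → Φ w' ∈ C} with hT
  -- T is open
  have hTopen : IsOpen T := by
    rw [isOpen_iff_mem_nhds]
    rintro w ⟨hwH, V, hVo, hwV, hV⟩
    have hcont : ContinuousAt Φ w := (analyticAt_Φ (hHD w hwH)).continuousAt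
    have : H ∩ Φ ⁻¹' V ∈ nhds w :=
      Filter.inter_mem (hHo.mem_nhds hwH) (hcont.preimage_mem_nhds (hVo.mem_nhds hwV))
    refine Filter.mem_of_superset this ?_
    rintro z ⟨hzH, hzV⟩
    exact ⟨hzH, V, hVo, hzV, hV⟩
  -- T is closed in H
  have hTclosed : H ∩ closure T ⊆ T := by
    rintro w ⟨hwH, hwcl⟩
    obtain ⟨U, hUo, hpU, -, k, φ, hφ, hAU⟩ := hC.2 (Φ w) (mem_univ _)
    have hcont : ContinuousAt Φ w := (analyticAt_Φ (hHD w hwH)).continuousAt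
    obtain ⟨r, hr, hball⟩ := Metric.mem_nhds_iff.mp
      (Filter.inter_mem (hHo.mem_nhds hwH) (hcont.preimage_mem_nhds (hUo.mem_nhds hpU)))
    set B := Metric.ball w r with hB
    have hBH : B ⊆ H := fun z hz => (hball hz).1
    have hBU : ∀ z ∈ B, Φ z ∈ U := fun z hz => (hball hz).2
    obtain ⟨w', hw'B, hw'T⟩ := mem_closure_iff_nhds.mp hwcl B (Metric.ball_mem_nhds w hr)
    obtain ⟨hw'H, V', hV'o, hw'V', hV'⟩ := hw'T
    have hzero : ∀ i, ∀ z ∈ B, φ i (Φ z) = 0 := by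
      intro i
      have han : AnalyticOnNhd ℝ (fun z => φ i (Φ z)) B := fun z hz =>
        (hφ i (Φ z) (hBU z hz)).comp (analyticAt_Φ (hHD z (hBH hz)))
      have hev : (fun z => φ i (Φ z)) =ᶠ[nhds w'] 0 := by
        have hcont' : ContinuousAt Φ w' := (analyticAt_Φ (hHD w' hw'H)).continuousAt
        have hmem : B ∩ Φ ⁻¹' V' ∈ nhds w' :=
          Filter.inter_mem (Metric.isOpen_ball.mem_nhds hw'B)
            (hcont'.preimage_mem_nhds (hV'o.mem_nhds hw'V'))
        refine Filter.eventually_of_mem hmem ?_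
        rintro z ⟨hzB, hzV'⟩
        have : Φ z ∈ C ∩ U := ⟨hV' z (hBH hzB) hzV', hBU z hzB⟩
        rw [hAU] at this
        exact this.2 i
      exact fun z hz => han.eqOn_zero_of_preconnected_of_eventuallyEq_zero
        (convex_ball w r).isPreconnected hw'B hev hz
    have hBo : IsOpen B := Metric.isOpen_ball
    have hprojc : Continuous fun x : E3 => ((x 0 : ℝ), (x 1 : ℝ)) := by fun_prop
    refine ⟨hwH, U ∩ (fun x : E3 => ((x 0 : ℝ), (x 1 : ℝ))) ⁻¹' B, ?_, ⟨hpU, ?_⟩, ?_⟩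
    · exact hUo.inter (hBo.preimage hprojc)
    · show ((Φ w 0 : ℝ), (Φ w 1 : ℝ)) ∈ B
      have heq : ((Φ w 0 : ℝ), (Φ w 1 : ℝ)) = w := by simp
      rw [heq]
      exact Metric.mem_ball_self hr
    · rintro z hzH ⟨hzU, hzB2⟩
      have hzB : (z : ℝ × ℝ) ∈ B := by simpa using hzB2
      have : Φ z ∈ C ∩ U := by
        rw [hAU]; exact ⟨hzU, fun i => hzero i z hzB⟩
      exact this.1
  -- conclude by preconnectedness
  obtain ⟨w₀, hw₀H, hinit'⟩ := hinit
  have hw₀T : w₀ ∈ T := ⟨hw₀H, hinit'⟩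
  have hHT : H ⊆ T := by
    by_contra hcon
    have hne2 : (H ∩ (closure T)ᶜ).Nonempty := by
      rw [not_subset] at hcon
      obtain ⟨z, hzH, hzT⟩ := hcon
      exact ⟨z, hzH, fun hz => hzT (hTclosed ⟨hzH, hz⟩)⟩
    obtain ⟨z, -, hzT, hzcl⟩ := hHc T (closure T)ᶜ hTopen isClosed_closure.isOpen_compl
      (fun z hz => by
        by_cases h : z ∈ closure T
        · exact Or.inl (hTclosed ⟨hz, h⟩)
        · exact Or.inr h)
      ⟨w₀, hw₀H, hw₀T⟩ hne2
    exact hzcl (subset_closure hzT)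
  intro w hw
  obtain ⟨-, V, -, hwV, hV⟩ := hHT hw
  exact hV w hw hwV

def Ψ (w : ℝ × ℝ) : E3 :=
  (w.1 * w.2) • ee 0 + w.2 • ee 1 + (w.1 ^ 4 * w.2 / ((w.1 ^ 2 + 1) * (w.1 + 1))) • ee 2

lemma psi_denom_ne_zero {s : ℝ} (hs : s ≠ -1) : (s ^ 2 + 1) * (s + 1) ≠ 0 := by
  have h1 : s ^ 2 + 1 ≠ 0 := by positivity
  have h2 : s + 1 ≠ 0 := fun h => hs (by linarith)
  exact mul_ne_zero h1 h2

lemma analyticAt_Ψ {w : ℝ × ℝ} (hw : w.1 ≠ -1) : AnalyticAt ℝ Ψ w := by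
  have h1 : AnalyticAt ℝ (fun p : ℝ × ℝ => p.1) w := analyticAt_fst
  have h2 : AnalyticAt ℝ (fun p : ℝ × ℝ => p.2) w := analyticAt_snd
  have h3 : AnalyticAt ℝ (fun p : ℝ × ℝ => p.1 ^ 4 * p.2 / ((p.1 ^ 2 + 1) * (p.1 + 1))) w :=
    ((h1.pow 4).mul h2).div (((h1.pow 2).add analyticAt_const).mul (h1.add analyticAt_const))
      (psi_denom_ne_zero hw)
  exact (((h1.mul h2).smul analyticAt_const).add (h2.smul analyticAt_const)).add
    (h3.smul analyticAt_const)

lemma Ψ_zero : Ψ ((0 : ℝ), (0 : ℝ)) = 0 := by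
  funext i; simp [Ψ]

lemma Ψ_eq_Φ {w : ℝ × ℝ} (ht : w.2 ≠ 0) (hs : w.1 ≠ -1) :
    Ψ w = Φ (w.1 * w.2, w.2) := by
  have hgg : gg (w.1 * w.2, w.2) = w.1 ^ 4 * w.2 / ((w.1 ^ 2 + 1) * (w.1 + 1)) := by
    simp only [gg]
    rw [div_eq_div_iff]
    · ring
    · exact denom_ne_zero (w := (w.1 * w.2, w.2)) (by
        show w.1 * w.2 + w.2 ≠ 0
        intro h
        have : w.2 * (w.1 + 1) = 0 := by linarith [h]
        rcases mul_eq_zero.mp this with h' | h'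
        · exact ht h'
        · exact hs (by linarith))
    · exact psi_denom_ne_zero hs
  funext i
  fin_cases i <;> simp [Ψ, Φ, ee, Pi.single_apply, hgg]

lemma convex_Hpos : Convex ℝ {w : ℝ × ℝ | 0 < w.1 + w.2} := by
  intro x hx y hy a b ha hb hab
  simp only [mem_setOf_eq] at *
  simp only [Prod.fst_add, Prod.snd_add, Prod.smul_fst, Prod.smul_snd, smul_eq_mul]
  rcases eq_or_lt_of_le ha with h | h
  · have hb1 : b = 1 := by linarith
    rw [← h, hb1]
    simpa using hy
  · nlinarith [mul_nonneg hb hy.le, mul_pos h hx]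

lemma convex_Hneg : Convex ℝ {w : ℝ × ℝ | w.1 + w.2 < 0} := by
  intro x hx y hy a b ha hb hab
  simp only [mem_setOf_eq] at *
  simp only [Prod.fst_add, Prod.snd_add, Prod.smul_fst, Prod.smul_snd, smul_eq_mul]
  rcases eq_or_lt_of_le ha with h | h
  · have hb1 : b = 1 := by linarith
    rw [← h, hb1]
    simpa using hy
  · nlinarith [mul_nonpos_of_nonneg_of_nonpos hb hy.le, mul_neg_of_pos_of_neg h hx]

lemma isOpen_Hpos : IsOpen {w : ℝ × ℝ | 0 < w.1 + w.2} :=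
  isOpen_lt continuous_const (continuous_fst.add continuous_snd)

lemma isOpen_Hneg : IsOpen {w : ℝ × ℝ | w.1 + w.2 < 0} :=
  isOpen_lt (continuous_fst.add continuous_snd) continuous_const

/-- The key crossing lemma: an analytic set containing the negative wing contains
the positive wing. -/
lemma crossing {C : Set E3} (hC : IsRealAnalyticSubset (Set.univ : Set E3) C)
    (hneg : ∀ w : ℝ × ℝ, w.1 + w.2 < 0 → Φ w ∈ C) :
    ∀ w : ℝ × ℝ, 0 < w.1 + w.2 → Φ w ∈ C := by
  obtain ⟨U, hUo, hpU, -, k, φ, hφ, hAU⟩ := hC.2 (0 : E3) (mem_univ _)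
  have hΨc : ContinuousAt Ψ ((0 : ℝ), (0 : ℝ)) := (analyticAt_Ψ (by norm_num)).continuousAt
  have hU0 : Ψ ⁻¹' U ∈ nhds ((0 : ℝ), (0 : ℝ)) := by
    apply hΨc.preimage_mem_nhds
    rw [Ψ_zero]
    exact hUo.mem_nhds hpU
  obtain ⟨r0, hr0, hball0⟩ := Metric.mem_nhds_iff.mp hU0
  set r : ℝ := min r0 (1 / 2) with hrdef
  have hr : 0 < r := lt_min hr0 (by norm_num)
  have hr2 : r ≤ 1 / 2 := min_le_right _ _
  have hballU : Metric.ball ((0 : ℝ), (0 : ℝ)) r ⊆ Ψ ⁻¹' U :=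
    (Metric.ball_subset_ball (min_le_left _ _)).trans hball0
  -- first coordinate bound inside the ball
  have hfst : ∀ z : ℝ × ℝ, z ∈ Metric.ball ((0 : ℝ), (0 : ℝ)) r → |z.1| < r ∧ |z.2| < r := by
    intro z hz
    rw [Metric.mem_ball, Prod.dist_eq, max_lt_iff] at hz
    obtain ⟨h1, h2⟩ := hz
    constructor
    · simpa [Real.dist_eq] using h1
    · simpa [Real.dist_eq] using h2
  have hsne : ∀ z : ℝ × ℝ, z ∈ Metric.ball ((0 : ℝ), (0 : ℝ)) r → z.1 ≠ -1 := by
    intro z hz h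
    have := (hfst z hz).1
    rw [h] at this
    have : (1 : ℝ) < r := by simpa using this
    linarith
  -- the composed functions vanish identically on the ball
  have hzero : ∀ i, ∀ z ∈ Metric.ball ((0 : ℝ), (0 : ℝ)) r, φ i (Ψ z) = 0 := by
    intro i
    have han : AnalyticOnNhd ℝ (fun z => φ i (Ψ z)) (Metric.ball ((0 : ℝ), (0 : ℝ)) r) :=
      fun z hz => (hφ i (Ψ z) (hballU hz)).comp (analyticAt_Ψ (hsne z hz))
    set z₀ : ℝ × ℝ := ((0 : ℝ), -r / 2) with hz₀def
    have hz₀ : z₀ ∈ Metric.ball ((0 : ℝ), (0 : ℝ)) r := by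
      rw [Metric.mem_ball, Prod.dist_eq]
      simp only [hz₀def, Real.dist_eq, sub_zero]
      rw [max_lt_iff]
      constructor
      · simpa using hr
      · rw [abs_of_nonpos (by linarith)]
        linarith
    have hev : (fun z => φ i (Ψ z)) =ᶠ[nhds z₀] 0 := by
      have hN : Metric.ball z₀ (r / 4) ∈ nhds z₀ := Metric.ball_mem_nhds _ (by linarith)
      refine Filter.eventually_of_mem hN ?_
      intro z hzN
      rw [Metric.mem_ball, Prod.dist_eq, max_lt_iff, Real.dist_eq, Real.dist_eq] at hzN
      obtain ⟨hz1, hz2⟩ := hzN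
      simp only [hz₀def, sub_zero] at hz1 hz2
      have hz1' : |z.1| < r / 4 := by simpa using hz1
      have hz2' : z.2 < -r / 4 := by
        cases' abs_lt.mp hz2 with h1 h2
        linarith
      have hzball : z ∈ Metric.ball ((0 : ℝ), (0 : ℝ)) r := by
        rw [Metric.mem_ball, Prod.dist_eq, max_lt_iff]
        constructor
        · rw [Real.dist_eq, sub_zero]; linarith [abs_lt.mp hz1']
        · rw [Real.dist_eq, sub_zero]
          rw [abs_lt]
          cases' abs_lt.mp hz2 with h1 h2
          constructor <;> linarith
      have hz2ne : z.2 ≠ 0 := by linarith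
      have hmemC : Ψ z ∈ C := by
        rw [Ψ_eq_Φ hz2ne (hsne z hzball)]
        apply hneg
        show z.1 * z.2 + z.2 < 0
        have h1 : z.1 + 1 > 0 := by
          cases' abs_lt.mp hz1' with h1 h2
          linarith
        nlinarith
      have : Ψ z ∈ C ∩ U := ⟨hmemC, hballU hzball⟩
      rw [hAU] at this
      exact this.2 i
    exact fun z hz => han.eqOn_zero_of_preconnected_of_eventuallyEq_zero
      (convex_ball _ _).isPreconnected hz₀ hev hz
  -- now feed a germ at (0, r/4) into `propagate`
  apply propagate hC isOpen_Hpos convex_Hpos.isPreconnected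
    (fun w hw => ne_of_gt hw)
  set b : ℝ := r / 4 with hbdef
  set δ : ℝ := r ^ 2 / 16 with hδdef
  have hδb : δ ≤ b / 2 := by
    rw [hδdef, hbdef]
    nlinarith
  have hδpos : 0 < δ := by positivity
  refine ⟨((0 : ℝ), b), by show (0 : ℝ) < 0 + b; simp [hbdef]; positivity,
    U ∩ (fun x : E3 => ((x 0 : ℝ), (x 1 : ℝ))) ⁻¹' Metric.ball ((0 : ℝ), b) δ, ?_, ?_, ?_⟩
  · exact hUo.inter (Metric.isOpen_ball.preimage (by fun_prop))
  · constructor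
    · have h1 : Ψ ((0 : ℝ), b) = Φ ((0 : ℝ) * b, b) := Ψ_eq_Φ (by positivity) (by norm_num)
      have h2 : ((0 : ℝ) * b, b) = ((0 : ℝ), b) := by norm_num
      rw [h2] at h1
      rw [← h1]
      apply hballU
      rw [Metric.mem_ball, Prod.dist_eq, max_lt_iff]
      constructor
      · simpa [Real.dist_eq] using hr
      · rw [Real.dist_eq, sub_zero, abs_of_pos (by positivity)]
        rw [hbdef]; linarith
    · show ((Φ ((0 : ℝ), b) 0 : ℝ), (Φ ((0 : ℝ), b) 1 : ℝ)) ∈ Metric.ball ((0 : ℝ), b) δ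
      have : ((Φ ((0 : ℝ), b) 0 : ℝ), (Φ ((0 : ℝ), b) 1 : ℝ)) = ((0 : ℝ), b) := by simp
      rw [this]
      exact Metric.mem_ball_self hδpos
  · rintro w' hw' ⟨hw'U, hw'B⟩
    have hw'B' : ((w'.1 : ℝ), (w'.2 : ℝ)) ∈ Metric.ball ((0 : ℝ), b) δ := by simpa using hw'B
    rw [Metric.mem_ball, Prod.dist_eq, max_lt_iff, Real.dist_eq, Real.dist_eq, sub_zero] at hw'B'
    obtain ⟨hu, hv⟩ := hw'B'
    have hvlo : b - δ < w'.2 := by cases' abs_lt.mp hv with h1 h2; linarith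
    have hvhi : w'.2 < b + δ := by cases' abs_lt.mp hv with h1 h2; linarith
    have hvpos : 0 < w'.2 := by linarith [hδb, hδpos]
    set s : ℝ := w'.1 / w'.2 with hsdef
    have hsabs : |s| < r / 2 := by
      have hvpos' : 0 < |w'.2| := by rw [abs_of_pos hvpos]; exact hvpos
      rw [hsdef, abs_div, div_lt_iff₀ hvpos']
      rw [abs_of_pos hvpos]
      calc |w'.1| < δ := hu
        _ = r / 2 * (r / 8) := by rw [hδdef]; ring
        _ ≤ r / 2 * w'.2 := by
            apply mul_le_mul_of_nonneg_left _ (by linarith)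
            have : r / 8 ≤ b - δ := by rw [hbdef, hδdef]; nlinarith
            linarith
    have hsne' : s ≠ -1 := by
      intro h
      rw [h] at hsabs
      have : (1 : ℝ) < r / 2 := by simpa using hsabs
      linarith
    have hw'eq : (w'.1, w'.2) = (s * w'.2, w'.2) := by
      rw [hsdef]
      field_simp
    have hΦΨ : Φ (w'.1, w'.2) = Ψ (s, w'.2) := by
      rw [Ψ_eq_Φ (w := (s, w'.2)) (ne_of_gt hvpos) hsne']
      show Φ (w'.1, w'.2) = Φ (s * w'.2, w'.2)
      rw [← hw'eq]
    have hsball : ((s : ℝ), (w'.2 : ℝ)) ∈ Metric.ball ((0 : ℝ), (0 : ℝ)) r := by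
      rw [Metric.mem_ball, Prod.dist_eq, max_lt_iff, Real.dist_eq, Real.dist_eq, sub_zero,
        sub_zero]
      constructor
      · linarith
      · rw [abs_of_pos hvpos]
        have : b + δ < r := by rw [hbdef, hδdef]; nlinarith
        linarith
    have : Φ w' ∈ C ∩ U := by
      rw [hAU]
      refine ⟨hw'U, fun i => ?_⟩
      have : Φ w' = Ψ (s, w'.2) := by
        have : w' = (w'.1, w'.2) := rfl
        rw [this, hΦΨ]
      rw [this]
      exact hzero i _ hsball
    exact this.1

lemma gg_neg (w : ℝ × ℝ) : gg (-w.1, -w.2) = -gg w := by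
  show (-w.1) ^ 4 / (((-w.1) ^ 2 + (-w.2) ^ 2) * (-w.1 + -w.2)) = -gg w
  have h1 : ((-w.1) ^ 2 + (-w.2) ^ 2) * (-w.1 + -w.2)
      = -((w.1 ^ 2 + w.2 ^ 2) * (w.1 + w.2)) := by ring
  have h2 : (-w.1) ^ 4 = w.1 ^ 4 := by ring
  rw [h1, h2, div_neg]
  rfl

lemma Φ_neg (w : ℝ × ℝ) : Φ (-w.1, -w.2) = -Φ w := by
  funext i
  fin_cases i <;> simp [gg_neg w]

/-- Graph points approximate every axis point. -/
lemma axis_approx (c : ℝ) {ε : ℝ} (hε : 0 < ε) :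
    ∃ w : ℝ × ℝ, w.1 + w.2 ≠ 0 ∧ dist (Φ w) (c • ee 2) < ε := by
  -- reduce to the case `0 ≤ c` via the symmetry `x ↦ -x`
  suffices h : ∀ c : ℝ, 0 ≤ c → ∃ w : ℝ × ℝ, w.1 + w.2 ≠ 0 ∧ dist (Φ w) (c • ee 2) < ε by
    rcases le_or_gt 0 c with hc | hc
    · exact h c hc
    · obtain ⟨w, hw, hd⟩ := h (-c) (by linarith)
      refine ⟨(-w.1, -w.2), by show -w.1 + -w.2 ≠ 0; intro hh; exact hw (by linarith), ?_⟩
      rw [Φ_neg]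
      have hc2 : c • ee 2 = -((-c) • ee 2) := by
        funext i; simp [ee, Pi.single_apply]
      rw [hc2, dist_neg_neg]
      exact hd
  intro c hc
  rcases eq_or_lt_of_le hc with hc0 | hcpos
  · -- c = 0 : take the point (0, ε/2, 0)
    refine ⟨((0 : ℝ), ε / 2), by show (0 : ℝ) + ε / 2 ≠ 0; positivity, ?_⟩
    rw [dist_pi_lt_iff hε]
    intro i
    have hgg0 : gg ((0 : ℝ), ε / 2) = 0 := by simp [gg]
    fin_cases i
    · simpa [ee, Pi.single_apply] using hε
    · simp [ee, Pi.single_apply, Real.dist_eq, abs_of_pos hε]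
      linarith
    · simpa [hgg0, ← hc0, ee, Pi.single_apply] using hε
  · -- c > 0 : intermediate value theorem construction
    set s : ℝ := min ε c / 2 with hsdef
    have hspos : 0 < s := by
      have := lt_min hε hcpos
      positivity
    have hsε : s < ε := by
      have := min_le_left ε c
      rw [hsdef]; linarith
    have hsc : s ≤ c := by
      have := min_le_right ε c
      rw [hsdef]; linarith
    set a : ℝ := -s + s ^ 2 / (2 * c) with hadef
    have hsa : s + a = s ^ 2 / (2 * c) := by rw [hadef]; ring
    have hsapos : 0 < s + a := by rw [hsa]; positivity
    have haneg : a < 0 := by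
      rw [hadef]
      have h1 : s ^ 2 / (2 * c) < s := by
        rw [div_lt_iff₀ (by positivity)]
        nlinarith
      linarith
    have habs : |a| ≤ s := by
      rw [abs_of_nonpos haneg.le, hadef]
      have : 0 ≤ s ^ 2 / (2 * c) := by positivity
      linarith
    -- continuity of the slice function on [a, 0]
    have hdenpos : ∀ v ∈ Icc a (0 : ℝ), 0 < (s ^ 2 + v ^ 2) * (s + v) := by
      intro v hv
      have h1 : 0 < s ^ 2 + v ^ 2 := by positivity
      have h2 : 0 < s + v := lt_of_lt_of_le hsapos (by linarith [hv.1])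
      exact mul_pos h1 h2
    have hcont : ContinuousOn (fun v : ℝ => gg (s, v)) (Icc a 0) := by
      simp only [gg]
      apply ContinuousOn.div
      · fun_prop
      · fun_prop
      · exact fun v hv => ne_of_gt (hdenpos v hv)
    have hk0 : gg (s, (0 : ℝ)) = s := by
      show s ^ 4 / ((s ^ 2 + 0 ^ 2) * (s + 0)) = s
      field_simp
      ring
    have hka : c ≤ gg (s, a) := by
      show c ≤ s ^ 4 / ((s ^ 2 + a ^ 2) * (s + a))
      rw [le_div_iff₀ (hdenpos a ⟨le_refl a, haneg.le⟩)]
      rw [hsa]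
      have ha2 : a ^ 2 ≤ s ^ 2 := by nlinarith [abs_le.mp habs]
      have hcne : (2 : ℝ) * c ≠ 0 := by positivity
      have : c * ((s ^ 2 + a ^ 2) * (s ^ 2 / (2 * c))) = (s ^ 2 + a ^ 2) * s ^ 2 / 2 := by
        field_simp
      rw [this]
      calc (s ^ 2 + a ^ 2) * s ^ 2 / 2 ≤ (s ^ 2 + s ^ 2) * s ^ 2 / 2 := by gcongr
        _ = s ^ 4 := by ring
    have hIVT := intermediate_value_Icc' (le_of_lt haneg) hcont
    have hcmem : c ∈ Icc (gg (s, (0 : ℝ))) (gg (s, a)) := by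
      rw [hk0]
      exact ⟨hsc, hka⟩
    obtain ⟨v, hv, hgv⟩ := hIVT hcmem
    refine ⟨(s, v), ?_, ?_⟩
    · show s + v ≠ 0
      have : 0 < s + v := lt_of_lt_of_le hsapos (by linarith [hv.1])
      exact ne_of_gt this
    · rw [dist_pi_lt_iff hε]
      intro i
      have hvabs : |v| < ε := by
        rw [abs_le] at habs
        rw [abs_lt]
        constructor
        · linarith [hv.1, habs.1]
        · linarith [hv.2]
      fin_cases i
      · simpa [ee, Pi.single_apply, Real.dist_eq, abs_of_pos hspos] using hsε
      · simpa [ee, Pi.single_apply, Real.dist_eq] using hvabs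
      · simp [ee, Pi.single_apply, Real.dist_eq, hgv, hε]

/-- A closed subset of `cartanSet3` containing both wings is everything. -/
lemma eq_R {C : Set E3} (hCc : IsClosed C) (hCR : C ⊆ cartanSet3)
    (hpos : ∀ w : ℝ × ℝ, 0 < w.1 + w.2 → Φ w ∈ C)
    (hneg : ∀ w : ℝ × ℝ, w.1 + w.2 < 0 → Φ w ∈ C) : C = cartanSet3 := by
  refine Subset.antisymm hCR fun x hx => ?_
  rcases lt_trichotomy (x 0 + x 1) 0 with h | h | h
  · rw [← graph_eq hx (ne_of_lt h)]
    exact hneg _ (by simpa using h)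
  · obtain ⟨h0, h1⟩ := axis_of_sum_eq_zero hx h
    have hxe : x = (x 2) • ee 2 := by
      funext i
      fin_cases i <;> simp [ee, Pi.single_apply, h0, h1]
    rw [← hCc.closure_eq, Metric.mem_closure_iff]
    intro ε hε
    obtain ⟨w, hw, hd⟩ := axis_approx (x 2) hε
    rcases lt_or_gt_of_ne hw with h' | h'
    · exact ⟨Φ w, hneg w h', by rw [hxe, dist_comm]; exact hd⟩
    · exact ⟨Φ w, hpos w h', by rw [hxe, dist_comm]; exact hd⟩
  · rw [← graph_eq hx (ne_of_gt h)]
    exact hpos _ (by simpa using h)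

/-- Each wing lies entirely in `A` or entirely in `B`. -/
lemma dichotomy {A B : Set E3}
    (hA : IsRealAnalyticSubset (Set.univ : Set E3) A)
    (hB : IsRealAnalyticSubset (Set.univ : Set E3) B)
    (hR : cartanSet3 = A ∪ B) {H : Set (ℝ × ℝ)} (hHo : IsOpen H)
    (hHc : IsPreconnected H) (hHD : ∀ w ∈ H, w.1 + w.2 ≠ 0) :
    (∀ w ∈ H, Φ w ∈ A) ∨ (∀ w ∈ H, Φ w ∈ B) := by
  by_cases hall : ∀ w ∈ H, Φ w ∈ A
  · exact Or.inl hall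
  · push_neg at hall
    obtain ⟨w₀, hw₀H, hw₀A⟩ := hall
    right
    apply propagate hB hHo hHc hHD
    refine ⟨w₀, hw₀H, Aᶜ, (isClosed_of_analytic hA).isOpen_compl, hw₀A, ?_⟩
    intro w' hw' hw'A
    have : Φ w' ∈ A ∪ B := by rw [← hR]; exact Φ_mem (hHD w' hw')
    rcases this with h | h
    · exact absurd h hw'A
    · exact h

lemma part2 {A B : Set E3}
    (hA : IsRealAnalyticSubset (Set.univ : Set E3) A)
    (hB : IsRealAnalyticSubset (Set.univ : Set E3) B)
    (hR : cartanSet3 = A ∪ B) :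
    A = cartanSet3 ∨ B = cartanSet3 := by
  have hAR : A ⊆ cartanSet3 := hR ▸ subset_union_left
  have hBR : B ⊆ cartanSet3 := hR ▸ subset_union_right
  have hHDp : ∀ w ∈ {w : ℝ × ℝ | 0 < w.1 + w.2}, w.1 + w.2 ≠ 0 := fun w hw => ne_of_gt hw
  have hHDn : ∀ w ∈ {w : ℝ × ℝ | w.1 + w.2 < 0}, w.1 + w.2 ≠ 0 := fun w hw => ne_of_lt hw
  rcases dichotomy hA hB hR isOpen_Hpos convex_Hpos.isPreconnected hHDp with hp | hp <;>
    rcases dichotomy hA hB hR isOpen_Hneg convex_Hneg.isPreconnected hHDn with hn | hn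
  · exact Or.inl (eq_R (isClosed_of_analytic hA) hAR (fun w hw => hp w hw) fun w hw => hn w hw)
  · -- A on the positive wing, B on the negative wing: B crosses to the positive wing
    have hcross := crossing hB fun w hw => hn w hw
    exact Or.inr (eq_R (isClosed_of_analytic hB) hBR hcross fun w hw => hn w hw)
  · -- B on the positive wing, A on the negative wing: A crosses to the positive wing
    have hcross := crossing hA fun w hw => hn w hw
    exact Or.inl (eq_R (isClosed_of_analytic hA) hAR hcross fun w hw => hn w hw)
  · exact Or.inr (eq_R (isClosed_of_analytic hB) hBR (fun w hw => hp w hw) fun w hw => hn w hw)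

lemma part1 : IsRealAnalyticSubset (Set.univ : Set E3) cartanSet3 := by
  refine ⟨subset_univ _, fun p _ => ⟨univ, isOpen_univ, mem_univ _, subset_rfl, 1,
    fun _ x => x 2 * (x 0 ^ 2 + x 1 ^ 2) * (x 0 + x 1) - x 0 ^ 4, ?_, ?_⟩⟩
  · intro i x _
    have h : ∀ j : Fin 3, AnalyticAt ℝ (fun x : E3 => x j) x := fun j =>
      (ContinuousLinearMap.proj (R := ℝ) (φ := fun _ : Fin 3 => ℝ) j).analyticAt x
    exact (((h 2).mul (((h 0).pow 2).add ((h 1).pow 2))).mul ((h 0).add (h 1))).sub ((h 0).pow 4)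
  · ext x
    simp only [cartanSet3, mem_inter_iff, mem_setOf_eq, mem_univ, true_and]
    constructor
    · intro hx i
      rw [sub_eq_zero]
      exact hx.1
    · intro hx
      have := hx 0
      rw [sub_eq_zero] at this
      exact ⟨this, trivial⟩

lemma proj_lipschitz : LipschitzWith 1 (fun x : E3 => ((x 0 : ℝ), (x 1 : ℝ))) := by
  apply LipschitzWith.of_dist_le_mul
  intro x y
  rw [NNReal.coe_one, one_mul, Prod.dist_eq]
  exact max_le (dist_le_pi_dist x y 0) (dist_le_pi_dist x y 1)

lemma axis_lipschitz : LipschitzWith 1 (fun t : ℝ => t • ee 2) := by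
  apply LipschitzWith.of_dist_le_mul
  intro t t'
  rw [NNReal.coe_one, one_mul]
  rw [dist_pi_le_iff dist_nonneg]
  intro i
  fin_cases i <;> simp [ee, Pi.single_apply, Real.dist_eq]

lemma dimH_R_le : dimH cartanSet3 ≤ 2 := by
  have hsub : cartanSet3 ⊆
      (Φ '' {w : ℝ × ℝ | w.1 + w.2 ≠ 0}) ∪ range (fun t : ℝ => t • ee 2) := by
    intro x hx
    by_cases h : x 0 + x 1 = 0
    · obtain ⟨h0, h1⟩ := axis_of_sum_eq_zero hx h
      right
      refine ⟨x 2, ?_⟩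
      funext i
      fin_cases i <;> simp [ee, Pi.single_apply, h0, h1]
    · left
      exact ⟨(x 0, x 1), h, graph_eq hx h⟩
  refine le_trans (dimH_mono hsub) ?_
  rw [dimH_union]
  have h1 : dimH (Φ '' {w : ℝ × ℝ | w.1 + w.2 ≠ 0}) ≤ 2 := by
    have := dimH_image_le_of_locally_lipschitzOn (f := Φ) (s := {w : ℝ × ℝ | w.1 + w.2 ≠ 0})
      (fun w hw => by
        obtain ⟨K, t, ht, hlip⟩ := ((analyticAt_Φ hw).contDiffAt (n := 1)).exists_lipschitzOnWith
        exact ⟨K, t, nhdsWithin_le_nhds ht, hlip⟩)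
    refine le_trans this ?_
    refine le_trans (dimH_mono (subset_univ _)) ?_
    rw [Real.dimH_univ_eq_finrank]
    simp [Module.finrank_prod]
  have h2 : dimH (range fun t : ℝ => t • ee 2) ≤ 2 := by
    refine le_trans axis_lipschitz.dimH_range_le ?_
    rw [Real.dimH_univ]
    exact le_of_lt (by norm_num)
  exact max_le h1 h2

lemma part3 : ∀ p ∈ cartanSet3, locDim cartanSet3 p = (2 : ℝ≥0∞) := by
  intro p hp
  apply le_antisymm
  · calc locDim cartanSet3 p ≤ dimH (cartanSet3 ∩ univ) :=
          iInf_le_of_le univ (iInf_le_of_le isOpen_univ (iInf_le_of_le (mem_univ p) le_rfl))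
      _ = dimH cartanSet3 := by rw [inter_univ]
      _ ≤ 2 := dimH_R_le
  · refine le_iInf fun U => le_iInf fun hU => le_iInf fun hpU => ?_
    obtain ⟨w, hwne, hwU⟩ : ∃ w : ℝ × ℝ, w.1 + w.2 ≠ 0 ∧ Φ w ∈ U := by
      by_cases h : p 0 + p 1 = 0
      · obtain ⟨h0, h1⟩ := axis_of_sum_eq_zero hp h
        obtain ⟨ε, hε, hball⟩ := Metric.mem_nhds_iff.mp (hU.mem_nhds hpU)
        obtain ⟨w, hw, hd⟩ := axis_approx (p 2) hε
        refine ⟨w, hw, hball ?_⟩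
        rw [Metric.mem_ball]
        have hpe : p = (p 2) • ee 2 := by
          funext i
          fin_cases i <;> simp [ee, Pi.single_apply, h0, h1]
        rw [← hpe] at hd
        exact hd
      · exact ⟨(p 0, p 1), h, by rw [graph_eq hp h]; exact hpU⟩
    have hcont : ContinuousAt Φ w := (analyticAt_Φ hwne).continuousAt
    have hmem : Φ ⁻¹' U ∈ nhds w := hcont.preimage_mem_nhds (hU.mem_nhds hwU)
    have hDo : IsOpen {w' : ℝ × ℝ | w'.1 + w'.2 ≠ 0} := by
      have : {w' : ℝ × ℝ | w'.1 + w'.2 ≠ 0}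
          = ((fun w' : ℝ × ℝ => w'.1 + w'.2) ⁻¹' {(0 : ℝ)})ᶜ := by
        ext z; simp
      rw [this]
      exact (isClosed_singleton.preimage (continuous_fst.add continuous_snd)).isOpen_compl
    obtain ⟨ρ, hρ, hball2⟩ := Metric.mem_nhds_iff.mp
      (Filter.inter_mem hmem (hDo.mem_nhds hwne))
    have hballsub : Metric.ball w ρ ⊆
        (fun x : E3 => ((x 0 : ℝ), (x 1 : ℝ))) '' (cartanSet3 ∩ U) := by
      intro z hz
      obtain ⟨hzU, hzD⟩ := hball2 hz
      refine ⟨Φ z, ⟨Φ_mem hzD, hzU⟩, ?_⟩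
      simp
    calc (2 : ℝ≥0∞) = dimH (Metric.ball w ρ) := by
          rw [Real.dimH_of_mem_nhds (Metric.ball_mem_nhds w hρ)]
          simp [Module.finrank_prod]
      _ ≤ dimH ((fun x : E3 => ((x 0 : ℝ), (x 1 : ℝ))) '' (cartanSet3 ∩ U)) := dimH_mono hballsub
      _ ≤ dimH (cartanSet3 ∩ U) := proj_lipschitz.dimH_image_le _

end CartanAux

/-- The set `{x₃(x₁² + x₂²)(x₁ + x₂) = x₁⁴} ⊆ ℝ³` is an irreducible real
analytic set of constant dimension `2`. -/
theorem statement14 :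
    IsRealAnalyticSubset (Set.univ : Set (Fin 3 → ℝ)) cartanSet3 ∧
    (∀ A B : Set (Fin 3 → ℝ),
      IsRealAnalyticSubset (Set.univ : Set (Fin 3 → ℝ)) A →
      IsRealAnalyticSubset (Set.univ : Set (Fin 3 → ℝ)) B →
      cartanSet3 = A ∪ B → A = cartanSet3 ∨ B = cartanSet3) ∧
    ∀ p ∈ cartanSet3, locDim cartanSet3 p = (2 : ℝ≥0∞) := by
  exact ⟨CartanAux.part1, fun A B hA hB hR => CartanAux.part2 hA hB hR, CartanAux.part3⟩
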